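/- Let B₁ be a real m×n matrix and B₂ be a real n×p matrix with B₁B₂ = 0. Let σ₀, σ₁, σ₂ be permutations of the index sets of sizes m, n, p respectively, with permutation matrices P₀, P₁, P₂, and set B̃₁ = P₀ᵀB₁P₁ and B̃₂ = P₁ᵀB₂P₂. Then B̃₁B̃₂ = 0, and for any coefficients α_0,…,α_{L₁}, β_0,…,β_{L₂}, the simplicial convolutional filter built from B̃₁, B̃₂ satisfies H(B̃₁,B̃₂) = P₁ᵀ H(B₁,B₂) P₁, where H(B₁,B₂) = Σ_{l=0}^{L₁} α_l (B₁ᵀB₁)^l + Σ_{l=0}^{L₂} β_l (B₂B₂ᵀ)^l. -/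
import Mathlib


open Matrix Finset

/-- A simplicial convolutional filter built from incidence matrices `B₁`, `B₂`:
`H = Σ_{l=0}^{L₁} α l • (B₁ᵀB₁)^l + Σ_{l=0}^{L₂} β l • (B₂B₂ᵀ)^l`. -/
noncomputable def scFilter {m n p : ℕ} (B₁ : Matrix (Fin m) (Fin n) ℝ)
    (B₂ : Matrix (Fin n) (Fin p) ℝ) (L₁ L₂ : ℕ) (α β : ℕ → ℝ) :
    Matrix (Fin n) (Fin n) ℝ :=
  (∑ l ∈ Finset.range (L₁ + 1), α l • (B₁ᵀ * B₁) ^ l)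
    + ∑ l ∈ Finset.range (L₂ + 1), β l • (B₂ * B₂ᵀ) ^ l

/-- The permutation matrix of a permutation `σ`: `P i j = 1` iff `j = σ i`. -/
def permMatrix {k : ℕ} (σ : Equiv.Perm (Fin k)) : Matrix (Fin k) (Fin k) ℝ :=
  Matrix.of fun i j => if j = σ i then 1 else 0

lemma permMatrix_mul_transpose {k : ℕ} (σ : Equiv.Perm (Fin k)) :
    permMatrix σ * (permMatrix σ)ᵀ = 1 := by
  ext i j
  simp only [mul_apply, transpose_apply, permMatrix, of_apply, one_apply]
  rw [Finset.sum_eq_single (σ i)]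
  · simp [eq_comm, σ.injective.eq_iff]
  · intro b _ hb
    simp [hb]
  · simp

lemma transpose_mul_permMatrix {k : ℕ} (σ : Equiv.Perm (Fin k)) :
    (permMatrix σ)ᵀ * permMatrix σ = 1 := by
  ext i j
  simp only [mul_apply, transpose_apply, permMatrix, of_apply, one_apply]
  rw [Finset.sum_eq_single (σ.symm i)]
  · by_cases h : i = j
    · simp [h]
    · have h2 : ¬ j = σ (σ.symm i) := by simpa [eq_comm] using h
      simp [h2, eq_comm, h]
  · intro b _ hb
    have : ¬ i = σ b := fun h => hb (by simp [h])
    simp [this]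
  · simp

lemma permMatrix_cancel_left {k : ℕ} (σ : Equiv.Perm (Fin k)) {l : ℕ}
    (M : Matrix (Fin k) (Fin l) ℝ) :
    permMatrix σ * ((permMatrix σ)ᵀ * M) = M := by
  rw [← Matrix.mul_assoc, permMatrix_mul_transpose, Matrix.one_mul]

lemma permMatrixT_cancel_left {k : ℕ} (σ : Equiv.Perm (Fin k)) {l : ℕ}
    (M : Matrix (Fin k) (Fin l) ℝ) :
    (permMatrix σ)ᵀ * (permMatrix σ * M) = M := by
  rw [← Matrix.mul_assoc, transpose_mul_permMatrix, Matrix.one_mul]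

lemma permConj_pow {n : ℕ} (σ : Equiv.Perm (Fin n)) (A : Matrix (Fin n) (Fin n) ℝ) (l : ℕ) :
    ((permMatrix σ)ᵀ * A * permMatrix σ) ^ l = (permMatrix σ)ᵀ * A ^ l * permMatrix σ := by
  induction l with
  | zero => simp [pow_zero, transpose_mul_permMatrix σ]
  | succ l ih =>
      rw [pow_succ, pow_succ, ih]
      simp only [Matrix.mul_assoc, permMatrix_cancel_left]

theorem filter_permutation_equivariance
    {m n p : ℕ} (B₁ : Matrix (Fin m) (Fin n) ℝ) (B₂ : Matrix (Fin n) (Fin p) ℝ)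
    (hB : B₁ * B₂ = 0)
    (σ₀ : Equiv.Perm (Fin m)) (σ₁ : Equiv.Perm (Fin n)) (σ₂ : Equiv.Perm (Fin p))
    (L₁ L₂ : ℕ) (α β : ℕ → ℝ) :
    ((permMatrix σ₀)ᵀ * B₁ * permMatrix σ₁) * ((permMatrix σ₁)ᵀ * B₂ * permMatrix σ₂) = 0 ∧
    scFilter ((permMatrix σ₀)ᵀ * B₁ * permMatrix σ₁)
        ((permMatrix σ₁)ᵀ * B₂ * permMatrix σ₂) L₁ L₂ α β =
      (permMatrix σ₁)ᵀ * scFilter B₁ B₂ L₁ L₂ α β * permMatrix σ₁ := by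
  constructor
  · have : ((permMatrix σ₀)ᵀ * B₁ * permMatrix σ₁) * ((permMatrix σ₁)ᵀ * B₂ * permMatrix σ₂)
        = (permMatrix σ₀)ᵀ * (B₁ * B₂ * permMatrix σ₂) := by
      simp only [Matrix.mul_assoc, permMatrix_cancel_left]
    rw [this, hB, Matrix.zero_mul, Matrix.mul_zero]
  · have e1 : ((permMatrix σ₀)ᵀ * B₁ * permMatrix σ₁)ᵀ * ((permMatrix σ₀)ᵀ * B₁ * permMatrix σ₁)
        = (permMatrix σ₁)ᵀ * (B₁ᵀ * B₁) * permMatrix σ₁ := by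
      simp only [Matrix.transpose_mul, Matrix.transpose_transpose, Matrix.mul_assoc,
        permMatrix_cancel_left]
    have e2 : ((permMatrix σ₁)ᵀ * B₂ * permMatrix σ₂) * ((permMatrix σ₁)ᵀ * B₂ * permMatrix σ₂)ᵀ
        = (permMatrix σ₁)ᵀ * (B₂ * B₂ᵀ) * permMatrix σ₁ := by
      simp only [Matrix.transpose_mul, Matrix.transpose_transpose, Matrix.mul_assoc,
        permMatrix_cancel_left]
    simp only [scFilter, e1, e2, permConj_pow, Matrix.mul_add, Matrix.add_mul,
      Matrix.mul_sum, Matrix.sum_mul, Matrix.mul_smul, Matrix.smul_mul]
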